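/- Let $b, m > 0$, let $h^\# < h_1 < h_2 < h^*$, and let $\tau_{h_1}, \tau_{h_2}$ be the unique values with $\tau_{h_i} > T_{h_i}$ and $g_{h_i}(\tau_{h_i}) = g_{h_i}(t_{h_i})$ for $i = 1, 2$. Then $\tau_{h_1} < \tau_{h_2}$ (the map $h \mapsto \tau_h$ is strictly increasing on $(h^\#, h^*)$). -/

import Mathlib

open Real Set

lemma phi_deriv (b h t : ℝ) (ht : 0 < t) (hth : t < h) :
    HasDerivAt (fun t : ℝ => t^2*(h-t)^(2*b))
      (2*t*(h-t)^(2*b) - 2*b*t^2*(h-t)^(2*b-1)) t := by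
  have h1 : HasDerivAt (fun t : ℝ => h - t) (-1) t := by
    exact (hasDerivAt_id t).const_sub h
  have h2 : HasDerivAt (fun t : ℝ => (h-t)^(2*b)) (-(2*b*(h-t)^(2*b-1))) t := by
    have := (Real.hasDerivAt_rpow_const (x := h - t) (p := 2*b)
      (Or.inl (by linarith))).comp t h1
    exact this.congr_deriv (by ring)
  have h3 : HasDerivAt (fun t : ℝ => t^2) (2*t) t := by
    simpa using hasDerivAt_pow 2 t
  have := h3.mul h2
  exact this.congr_deriv (by ring)

lemma phi_cont (b h : ℝ) (hb : 0 < b) :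
    Continuous (fun t : ℝ => t^2*(h-t)^(2*b)) := by
  apply Continuous.mul (by continuity)
  exact (continuous_const.sub continuous_id).rpow_const (fun x => Or.inr (by linarith))

-- derivative sign rewrite: for 0<t<h,
lemma phi_deriv_factor (b h t : ℝ) (hb : 0 < b) (ht : 0 < t) (hth : t < h) :
    2*t*(h-t)^(2*b) - 2*b*t^2*(h-t)^(2*b-1)
      = 2*t*(h-t)^(2*b-1) * (h - t - b*t) := by
  have hpos : (0:ℝ) < h - t := by linarith
  have : (h-t)^(2*b) = (h-t)^(2*b-1) * (h-t) := by
    rw [show (2*b:ℝ) = (2*b-1)+1 by ring, Real.rpow_add hpos, Real.rpow_one]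
    ring_nf

  rw [this]; ring

lemma phi_mono (b h : ℝ) (hb : 0 < b) (hh : 0 < h) :
    StrictMonoOn (fun t : ℝ => t^2*(h-t)^(2*b)) (Icc 0 (h/(b+1))) := by
  have hconv : Convex ℝ (Icc (0:ℝ) (h/(b+1))) := convex_Icc _ _
  apply strictMonoOn_of_deriv_pos hconv ((phi_cont b h hb).continuousOn)
  intro t ht
  rw [interior_Icc] at ht
  obtain ⟨ht0, ht1⟩ := ht
  have hth : t < h := by
    have : h/(b+1) < h := by
      rw [div_lt_iff₀ (by linarith)]; nlinarith
    linarith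
  rw [(phi_deriv b h t ht0 hth).deriv, phi_deriv_factor b h t hb ht0 hth]
  have h1 : (0:ℝ) < (h-t)^(2*b-1) := Real.rpow_pos_of_pos (by linarith) _
  have h2 : 0 < h - t - b*t := by
    have := (lt_div_iff₀ (by linarith : (0:ℝ) < b+1)).mp ht1
    nlinarith
  positivity

lemma phi_anti (b h : ℝ) (hb : 0 < b) (hh : 0 < h) :
    StrictAntiOn (fun t : ℝ => t^2*(h-t)^(2*b)) (Icc (h/(b+1)) h) := by
  apply strictAntiOn_of_deriv_neg (convex_Icc _ _) ((phi_cont b h hb).continuousOn)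
  intro t ht
  rw [interior_Icc] at ht
  obtain ⟨ht1, hth⟩ := ht
  have ht0 : 0 < t := lt_trans (by positivity) ht1
  rw [(phi_deriv b h t ht0 hth).deriv, phi_deriv_factor b h t hb ht0 hth]
  have h1 : (0:ℝ) < (h-t)^(2*b-1) := Real.rpow_pos_of_pos (by linarith) _
  have h2 : h - t - b*t < 0 := by
    have := (div_lt_iff₀ (by linarith : (0:ℝ) < b+1)).mp ht1
    nlinarith
  have h3 : 0 < 2*t*(h-t)^(2*b-1) := by positivity
  nlinarith

section helpers
variable (b m h : ℝ)

lemma gs_deriv (hb : 0 < b) (t : ℝ) (ht : t ≠ 0) :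
    HasDerivAt (fun t : ℝ => m^2/t + (h^(2*b+1) - (h-t)^(2*b+1))/(2*b+1))
      (-(m^2/t^2) + (h-t)^(2*b)) t := by
  have h1 : HasDerivAt (fun t : ℝ => m^2/t) (-(m^2/t^2)) t := by
    have := (hasDerivAt_inv ht).const_mul (m^2)
    simpa [div_eq_mul_inv, mul_comm] using this
  have hu : HasDerivAt (fun t : ℝ => h - t) (-1) t := by
    exact (hasDerivAt_id t).const_sub h
  have h2 : HasDerivAt (fun t : ℝ => (h-t)^(2*b+1))
      (-((2*b+1)*(h-t)^(2*b))) t := by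
    have := (Real.hasDerivAt_rpow_const (x := h - t) (p := 2*b+1)
      (Or.inr (by linarith))).comp t hu
    have he : (2*b+1-1 : ℝ) = 2*b := by ring
    rw [he] at this
    exact this.congr_deriv (by ring)
  have h3 : HasDerivAt (fun t : ℝ => (h^(2*b+1) - (h-t)^(2*b+1))/(2*b+1))
      ((h-t)^(2*b)) t := by
    have := ((hasDerivAt_const t (h^(2*b+1))).sub h2).div_const (2*b+1)
    exact this.congr_deriv (by rw [div_eq_iff (ne_of_gt (by linarith))]; ring)
  exact h1.add h3

lemma gs_cont (hb : 0 < b) :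
    ContinuousOn (fun t : ℝ => m^2/t + (h^(2*b+1) - (h-t)^(2*b+1))/(2*b+1))
      {t : ℝ | t ≠ 0} := by
  apply ContinuousOn.add
  · exact continuousOn_const.div continuousOn_id (fun x hx => hx)
  · apply Continuous.continuousOn
    apply Continuous.div_const
    apply Continuous.sub continuous_const
    exact (continuous_const.sub continuous_id).rpow_const (fun x => Or.inr (by linarith))

lemma gs_anti_top (hb : 0 < b) (hm : 0 < m) (hh : 0 < h) (T : ℝ)
    (hT : h/(b+1) < T) (hT' : T < h) (hE : T^2 * (h - T) ^ (2*b) = m^2) :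
    StrictAntiOn (fun t : ℝ => m^2/t + (h^(2*b+1) - (h-t)^(2*b+1))/(2*b+1))
      (Icc T h) := by
  have hT0 : 0 < T := lt_trans (by positivity) hT
  apply strictAntiOn_of_deriv_neg (convex_Icc _ _)
    ((gs_cont b m h hb).mono (fun x hx => by
      exact ne_of_gt (lt_of_lt_of_le hT0 hx.1)))
  intro t ht
  rw [interior_Icc] at ht
  obtain ⟨ht1, ht2⟩ := ht
  have ht0 : 0 < t := lt_trans hT0 ht1
  rw [(gs_deriv b m h hb t (ne_of_gt ht0)).deriv]
  have hphi : t^2 * (h-t)^(2*b) < m^2 := by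
    have := phi_anti b h hb hh ⟨le_of_lt hT, le_of_lt hT'⟩ ⟨le_trans (le_of_lt hT) (le_of_lt ht1), le_of_lt ht2⟩ ht1
    simp only at this
    linarith [hE ▸ this]
  have : (h-t)^(2*b) < m^2/t^2 := by
    rw [lt_div_iff₀ (by positivity)]
    linarith [hphi]
  linarith

lemma gs_anti_bot (hb : 0 < b) (hm : 0 < m) (hh : 0 < h) (s : ℝ)
    (hs0 : 0 < s) (hs : s < h/(b+1)) (he : s^2 * (h - s) ^ (2*b) = m^2) :
    StrictAntiOn (fun t : ℝ => m^2/t + (h^(2*b+1) - (h-t)^(2*b+1))/(2*b+1))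
      (Ioc 0 s) := by
  apply strictAntiOn_of_deriv_neg (convex_Ioc _ _)
    ((gs_cont b m h hb).mono (fun x hx => ne_of_gt hx.1))
  intro t ht
  rw [interior_Ioc] at ht
  obtain ⟨ht0, ht1⟩ := ht
  rw [(gs_deriv b m h hb t (ne_of_gt ht0)).deriv]
  have hphi : t^2 * (h-t)^(2*b) < m^2 := by
    have := phi_mono b h hb hh ⟨le_of_lt ht0, le_of_lt (lt_trans ht1 hs)⟩ ⟨le_of_lt hs0, le_of_lt hs⟩ ht1
    simp only at this
    linarith [he ▸ this]
  have : (h-t)^(2*b) < m^2/t^2 := by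
    rw [lt_div_iff₀ (by positivity)]
    linarith [hphi]
  linarith

lemma gs_mono_mid (hb : 0 < b) (hm : 0 < m) (hh : 0 < h) (s T : ℝ)
    (hs0 : 0 < s) (hs : s < h/(b+1)) (he : s^2 * (h - s) ^ (2*b) = m^2)
    (hT : h/(b+1) < T) (hT' : T < h) (hE : T^2 * (h - T) ^ (2*b) = m^2) :
    StrictMonoOn (fun t : ℝ => m^2/t + (h^(2*b+1) - (h-t)^(2*b+1))/(2*b+1))
      (Icc s T) := by
  apply strictMonoOn_of_deriv_pos (convex_Icc _ _)
    ((gs_cont b m h hb).mono (fun x hx => ne_of_gt (lt_of_lt_of_le hs0 hx.1)))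
  intro t ht
  rw [interior_Icc] at ht
  obtain ⟨ht1, ht2⟩ := ht
  have ht0 : 0 < t := lt_trans hs0 ht1
  rw [(gs_deriv b m h hb t (ne_of_gt ht0)).deriv]
  have hphi : m^2 < t^2 * (h-t)^(2*b) := by
    rcases le_or_gt t (h/(b+1)) with hc | hc
    · have := phi_mono b h hb hh ⟨le_of_lt hs0, le_of_lt hs⟩ ⟨le_of_lt ht0, hc⟩ ht1
      simp only at this
      linarith [he ▸ this]
    · have := phi_anti b h hb hh ⟨le_of_lt hc, le_of_lt (lt_trans ht2 hT')⟩ ⟨le_of_lt hT, le_of_lt hT'⟩ ht2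
      simp only at this
      linarith [hE ▸ this]
  have : m^2/t^2 < (h-t)^(2*b) := by
    rw [div_lt_iff₀ (by positivity)]
    linarith [hphi]
  linarith

lemma pow_gap_mono (hb : 0 < b) (d : ℝ) (hd : 0 < d) :
    StrictMonoOn (fun x : ℝ => (x+d)^(2*b+1) - x^(2*b+1)) (Ici 0) := by
  apply strictMonoOn_of_deriv_pos (convex_Ici _)
  · apply Continuous.continuousOn
    apply Continuous.sub
    · exact (continuous_id.add continuous_const).rpow_const (fun x => Or.inr (by linarith))
    · exact continuous_id.rpow_const (fun x => Or.inr (by linarith))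
  intro x hx
  rw [interior_Ici] at hx
  have h1 : HasDerivAt (fun x : ℝ => (x+d)^(2*b+1)) ((2*b+1)*(x+d)^(2*b)) x := by
    have := (Real.hasDerivAt_rpow_const (x := x+d) (p := 2*b+1)
      (Or.inr (by linarith))).comp x ((hasDerivAt_id x).add_const d)
    have he : (2*b+1-1 : ℝ) = 2*b := by ring
    rw [he] at this
    exact this.congr_deriv (by ring)
  have h2 : HasDerivAt (fun x : ℝ => x^(2*b+1)) ((2*b+1)*x^(2*b)) x := by
    have := Real.hasDerivAt_rpow_const (x := x) (p := 2*b+1) (Or.inr (by linarith))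
    have he : (2*b+1-1 : ℝ) = 2*b := by ring
    rw [he] at this
    exact this
  rw [HasDerivAt.deriv (f := fun x : ℝ => (x+d)^(2*b+1) - x^(2*b+1)) (h1.sub h2)]
  have : x^(2*b) < (x+d)^(2*b) :=
    Real.rpow_lt_rpow (le_of_lt hx) (by linarith) (by linarith)
  nlinarith

end helpers




/-- The map h ↦ τ_h is strictly increasing on (h^#, h^*). -/
theorem tau_strict_mono (b m h₁ h₂ t₁ T₁ τ₁ t₂ T₂ τ₂ : ℝ) (hb : 0 < b) (hm : 0 < m)
    (hh₁ : (b+1) / b ^ (b/(b+1)) * m ^ (1/(b+1)) < h₁) (h12 : h₁ < h₂)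
    (hh₂ : h₂ < (2*b+2) / (2*b+1) ^ (b/(b+1)) * m ^ (1/(b+1)))
    (ht₁ : 0 < t₁) (ht₁' : t₁ < h₁/(b+1)) (he₁ : t₁^2 * (h₁ - t₁) ^ (2*b) = m^2)
    (hT₁ : h₁/(b+1) < T₁) (hT₁' : T₁ < h₁) (hE₁ : T₁^2 * (h₁ - T₁) ^ (2*b) = m^2)
    (ht₂ : 0 < t₂) (ht₂' : t₂ < h₂/(b+1)) (he₂ : t₂^2 * (h₂ - t₂) ^ (2*b) = m^2)
    (hT₂ : h₂/(b+1) < T₂) (hT₂' : T₂ < h₂) (hE₂ : T₂^2 * (h₂ - T₂) ^ (2*b) = m^2)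
    (hτ₁ : T₁ < τ₁)
    (hg₁ : m^2 / τ₁ + (h₁ ^ (2*b+1) - (h₁ - min h₁ τ₁) ^ (2*b+1)) / (2*b+1) =
           m^2 / t₁ + (h₁ ^ (2*b+1) - (h₁ - min h₁ t₁) ^ (2*b+1)) / (2*b+1))
    (hτ₂ : T₂ < τ₂)
    (hg₂ : m^2 / τ₂ + (h₂ ^ (2*b+1) - (h₂ - min h₂ τ₂) ^ (2*b+1)) / (2*b+1) =
           m^2 / t₂ + (h₂ ^ (2*b+1) - (h₂ - min h₂ t₂) ^ (2*b+1)) / (2*b+1)) :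
    τ₁ < τ₂ := by
  have hb1 : (0:ℝ) < b + 1 := by linarith
  have hh₁0 : 0 < h₁ := lt_trans (by positivity) hh₁
  have hh₂0 : 0 < h₂ := lt_trans hh₁0 h12
  have hT₂0 : 0 < T₂ := lt_trans (by positivity) hT₂
  have hτ₁0 : 0 < τ₁ := lt_trans (lt_trans (by positivity) hT₁) hτ₁
  have ht₁h₁ : t₁ < h₁ := by
    have : h₁/(b+1) < h₁ := by rw [div_lt_iff₀ hb1]; nlinarith
    linarith
  have ht₂h₂ : t₂ < h₂ := by
    have : h₂/(b+1) < h₂ := by rw [div_lt_iff₀ hb1]; nlinarith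
    linarith
  have ht₁T₂ : t₁ < T₂ := by
    have : h₁/(b+1) < h₂/(b+1) := by
      apply div_lt_div_of_pos_right h12 hb1
    linarith
  -- the full g₂ function (with min)
  set G₂ : ℝ → ℝ := fun t => m^2/t + (h₂^(2*b+1) - (h₂ - min h₂ t)^(2*b+1))/(2*b+1) with hG₂
  set G₁ : ℝ → ℝ := fun t => m^2/t + (h₁^(2*b+1) - (h₁ - min h₁ t)^(2*b+1))/(2*b+1) with hG₁
  set gs₂ : ℝ → ℝ := fun t => m^2/t + (h₂^(2*b+1) - (h₂ - t)^(2*b+1))/(2*b+1) with hgs₂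
  have hGg : ∀ t, t ≤ h₂ → G₂ t = gs₂ t := by
    intro t htle
    simp only [hG₂, hgs₂, min_eq_right htle]
  have hGc : ∀ t, h₂ ≤ t → G₂ t = m^2/t + h₂^(2*b+1)/(2*b+1) := by
    intro t htle
    simp only [hG₂, min_eq_left htle, sub_self]
    rw [Real.zero_rpow (by positivity)]
    ring_nf
  -- G₂ is strictly decreasing on [T₂, ∞)
  have hanti : ∀ x y, T₂ ≤ x → x < y → G₂ y < G₂ x := by
    intro x y hx hxy
    have hx0 : 0 < x := lt_of_lt_of_le hT₂0 hx
    have hy0 : 0 < y := lt_trans hx0 hxy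
    rcases le_or_gt y h₂ with hy | hy
    · rw [hGg x (le_trans (le_of_lt hxy) hy), hGg y hy]
      exact gs_anti_top b m h₂ hb hm hh₂0 T₂ hT₂ hT₂' hE₂
        ⟨hx, le_trans (le_of_lt hxy) hy⟩ ⟨le_trans hx (le_of_lt hxy), hy⟩ hxy
    · rcases le_or_gt h₂ x with hx2 | hx2
      · rw [hGc x hx2, hGc y (le_trans hx2 (le_of_lt hxy))]
        have : m^2/y < m^2/x := div_lt_div_of_pos_left (by positivity) hx0 hxy
        linarith
      · have step1 : G₂ h₂ < G₂ x := by
          rw [hGg x (le_of_lt hx2), hGg h₂ le_rfl]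
          exact gs_anti_top b m h₂ hb hm hh₂0 T₂ hT₂ hT₂' hE₂
            ⟨hx, le_of_lt hx2⟩ ⟨le_of_lt hT₂', le_rfl⟩ hx2
        have step2 : G₂ y < G₂ h₂ := by
          rw [hGc y (le_of_lt hy), hGc h₂ le_rfl]
          have : m^2/y < m^2/h₂ := div_lt_div_of_pos_left (by positivity) hh₂0 hy
          linarith
        linarith
  -- G₂ t₂ ≤ G₂ t₁
  have hmin2 : G₂ t₂ ≤ G₂ t₁ := by
    rw [hGg t₂ (le_of_lt ht₂h₂), hGg t₁ (le_of_lt (lt_trans ht₁h₁ h12))]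
    rcases lt_trichotomy t₁ t₂ with hc | hc | hc
    · exact le_of_lt (gs_anti_bot b m h₂ hb hm hh₂0 t₂ ht₂ ht₂' he₂
        ⟨ht₁, le_of_lt hc⟩ ⟨ht₂, le_rfl⟩ hc)
    · rw [hc]
    · exact le_of_lt (gs_mono_mid b m h₂ hb hm hh₂0 t₂ T₂ ht₂ ht₂' he₂ hT₂ hT₂' hE₂
        ⟨le_rfl, le_of_lt (lt_trans ht₂' hT₂)⟩ ⟨le_of_lt hc, le_of_lt ht₁T₂⟩ hc)
  -- the gap inequality : G₂ τ₁ - G₁ τ₁ > G₂ t₁ - G₁ t₁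
  have hgap : G₂ t₁ - G₁ t₁ < G₂ τ₁ - G₁ τ₁ := by
    have hminτ₁ : t₁ < min h₁ τ₁ := lt_min ht₁h₁ (lt_trans (lt_trans ht₁' hT₁) hτ₁)
    set a₂ : ℝ := h₁ - min h₁ τ₁ with ha₂
    set A₂ : ℝ := h₂ - min h₂ τ₁ with hA₂
    set d : ℝ := h₂ - h₁ with hd
    have hd0 : 0 < d := by simp only [hd]; linarith
    have ha₂0 : 0 ≤ a₂ := by simp only [ha₂, sub_nonneg]; exact min_le_left _ _
    have hA₂0 : 0 ≤ A₂ := by simp only [hA₂, sub_nonneg]; exact min_le_left _ _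
    have ha₂a₁ : a₂ < h₁ - t₁ := by simp only [ha₂]; linarith
    have hA₂le : A₂ ≤ a₂ + d := by
      simp only [hA₂, ha₂, hd]
      have : min h₁ τ₁ ≤ min h₂ τ₁ := min_le_min (le_of_lt h12) le_rfl
      linarith
    have key1 : A₂^(2*b+1) - a₂^(2*b+1) ≤ (a₂+d)^(2*b+1) - a₂^(2*b+1) := by
      have : A₂^(2*b+1) ≤ (a₂+d)^(2*b+1) :=
        Real.rpow_le_rpow hA₂0 hA₂le (by linarith)
      linarith
    have key2 : (a₂+d)^(2*b+1) - a₂^(2*b+1) < (h₂-t₁)^(2*b+1) - (h₁-t₁)^(2*b+1) := by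
      have := pow_gap_mono b hb d hd0
        ha₂0 (by simp only [mem_Ici]; linarith) ha₂a₁
      simp only at this
      have he : h₁ - t₁ + d = h₂ - t₁ := by simp only [hd]; ring
      rw [he] at this
      exact this
    have hkey : A₂^(2*b+1) - a₂^(2*b+1) < (h₂-t₁)^(2*b+1) - (h₁-t₁)^(2*b+1) :=
      lt_of_le_of_lt key1 key2
    have hmint₁ : min h₂ t₁ = t₁ := min_eq_right (le_of_lt (lt_trans ht₁h₁ h12))
    have hmint₁' : min h₁ t₁ = t₁ := min_eq_right (le_of_lt ht₁h₁)
    have hc0 : (0:ℝ) < 2*b+1 := by linarith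
    have e : ∀ (u X Y : ℝ), m^2/u + (h₂^(2*b+1) - X)/(2*b+1)
        - (m^2/u + (h₁^(2*b+1) - Y)/(2*b+1))
        = (h₂^(2*b+1) - h₁^(2*b+1))/(2*b+1) + (Y - X)/(2*b+1) := fun u X Y => by ring
    simp only [hG₂, hG₁, hmint₁, hmint₁', ← ha₂, ← hA₂]
    rw [e, e]
    apply (add_lt_add_iff_left _).mpr
    apply div_lt_div_of_pos_right _ hc0
    linarith
  -- conclude
  have hGτ₁ : G₁ τ₁ = G₁ t₁ := by
    have hmint₁' : min h₁ t₁ = t₁ := min_eq_right (le_of_lt ht₁h₁)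
    simp only [hG₁]
    rw [hmint₁'] at hg₁ ⊢
    exact hg₁
  have hGτ₂ : G₂ τ₂ = G₂ t₂ := by
    have hmint₂ : min h₂ t₂ = t₂ := min_eq_right (le_of_lt ht₂h₂)
    simp only [hG₂]
    rw [hmint₂] at hg₂ ⊢
    exact hg₂
  have hkey2 : G₂ t₂ < G₂ τ₁ := by linarith
  by_contra hcon
  push_neg at hcon
  rcases eq_or_lt_of_le hcon with hc | hc
  · rw [hc] at hGτ₂; linarith
  · have := hanti τ₂ τ₁ (le_of_lt hτ₂) hc
    linarith
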